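/- Let X be a Polish topological vector space over 𝕂 (= ℝ or ℂ), let T be a continuous linear operator on X, and let a, b ∈ 𝕂. Assume that aT and bT each admit an invariant Borel probability measure different from δ₀. Then the operators aT and bT are orthogonal if and only if |a| ≠ |b|. More precisely: if |a| ≠ |b| then for any Borel probability measures m₁, m₂ with m₁ invariant under aT, m₂ invariant under bT, and m₁({0}) = 0 = m₂({0}), the measures m₁ and m₂ are mutually singular; and if |a| = |b|, then aT and bT share a common invariant Borel probability measure different from δ₀. -/

import Mathlib

open MeasureTheory Filter


open MeasureTheory Filter
open scoped ENNReal

lemma aux_eq_dirac {X : Type*} [MeasurableSpace X] [MeasurableSingletonClass X]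
    {m : Measure X} [IsProbabilityMeasure m] {p : X} (h : m {p} = 1) :
    m = Measure.dirac p := by
  ext s hs
  rw [Measure.dirac_apply' _ hs]
  by_cases hp : p ∈ s
  · have h2 : (1:ℝ≥0∞) ≤ m s := h ▸ measure_mono (Set.singleton_subset_iff.mpr hp)
    simp [Set.indicator_of_mem hp, le_antisymm prob_le_one h2]
  · have hsub : s ⊆ {p}ᶜ := Set.subset_compl_singleton_iff.mpr hp
    have : m s ≤ m {p}ᶜ := measure_mono hsub
    rw [prob_compl_eq_one_sub (measurableSet_singleton p), h, tsub_self] at this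
    simp [Set.indicator_of_notMem hp, le_antisymm this (zero_le)]

lemma aux_iter {X : Type*} [MeasurableSpace X] (m : Measure X) (S : X → X)
    (hS : Measurable S) (hinv : ∀ A : Set X, MeasurableSet A → m (S ⁻¹' A) = m A) :
    ∀ (n : ℕ) (A : Set X), MeasurableSet A → m (S^[n] ⁻¹' A) = m A := by
  intro n
  induction n with
  | zero => simp
  | succ n ih =>
    intro A hA
    rw [Function.iterate_succ, Set.preimage_comp,
      hinv _ ((hS.iterate n) hA), ih A hA]

lemma aux_pow {𝕂 : Type*} [Field 𝕂] {X : Type*} [AddCommGroup X] [Module 𝕂 X]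
    (T : X → X) (hT : IsLinearMap 𝕂 T) (a : 𝕂) :
    ∀ (n : ℕ) (x : X), (fun x => a • T x)^[n] x = a ^ n • T^[n] x := by
  intro n
  induction n with
  | zero => simp
  | succ n ih =>
    intro x
    rw [Function.iterate_succ_apply', Function.iterate_succ_apply', ih, hT.map_smul,
      smul_smul, ← pow_succ']
lemma aux_strip {X : Type*} [MeasurableSpace X] [MeasurableSingletonClass X] [Zero X]
    (m : Measure X) [IsProbabilityMeasure m] (h1 : m {(0:X)} ≠ 1) :
    ∃ m' : Measure X, IsProbabilityMeasure m' ∧ m' {(0:X)} = 0 ∧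
      ∀ F : X → X, Measurable F → F 0 = 0 →
        (∀ A : Set X, MeasurableSet A → m (F ⁻¹' A) = m A) →
        (∀ A : Set X, MeasurableSet A → m' (F ⁻¹' A) = m' A) := by
  set c := m {(0:X)} with hc
  have hc1 : c < 1 := lt_of_le_of_ne prob_le_one h1
  have hcne : (1 : ℝ≥0∞) - c ≠ 0 := by
    simp only [ne_eq, tsub_eq_zero_iff_le, not_le]
    exact hc1
  have hcnetop : (1 : ℝ≥0∞) - c ≠ ⊤ := by
    exact ne_top_of_le_ne_top ENNReal.one_ne_top tsub_le_self
  set r := ((1 : ℝ≥0∞) - c)⁻¹ with hr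
  refine ⟨r • m.restrict {(0:X)}ᶜ, ?_, ?_, ?_⟩
  · constructor
    rw [Measure.smul_apply, Measure.restrict_apply MeasurableSet.univ, Set.univ_inter,
      prob_compl_eq_one_sub (measurableSet_singleton 0), smul_eq_mul, hr, ← hc,
      ENNReal.inv_mul_cancel hcne hcnetop]
  · rw [Measure.smul_apply, Measure.restrict_apply (measurableSet_singleton 0)]
    simp
  · intro F hF hF0 hinv A hA
    have key : m (F ⁻¹' A ∩ {(0:X)}ᶜ) = m (A ∩ {(0:X)}ᶜ) := by
      have hnull : m (F ⁻¹' {(0:X)} \ {(0:X)}) = 0 := by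
        rw [measure_diff (Set.singleton_subset_iff.mpr (by simp [hF0]))
          (measurableSet_singleton 0).nullMeasurableSet (measure_ne_top m _),
          hinv _ (measurableSet_singleton 0), tsub_self]
      have hle1 : m (F ⁻¹' A ∩ {(0:X)}ᶜ) ≤ m (F ⁻¹' (A ∩ {(0:X)}ᶜ)) := by
        calc m (F ⁻¹' A ∩ {(0:X)}ᶜ)
            ≤ m (F ⁻¹' (A ∩ {(0:X)}ᶜ) ∪ (F ⁻¹' {(0:X)} \ {(0:X)})) := by
              apply measure_mono
              intro x hx
              by_cases h0 : F x = 0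
              · exact Or.inr ⟨by simpa using h0, hx.2⟩
              · exact Or.inl ⟨hx.1, by simpa using h0⟩
          _ ≤ m (F ⁻¹' (A ∩ {(0:X)}ᶜ)) + m (F ⁻¹' {(0:X)} \ {(0:X)}) := measure_union_le _ _
          _ = m (F ⁻¹' (A ∩ {(0:X)}ᶜ)) := by rw [hnull, add_zero]
      have hle2 : m (F ⁻¹' (A ∩ {(0:X)}ᶜ)) ≤ m (F ⁻¹' A ∩ {(0:X)}ᶜ) := by
        apply measure_mono
        intro x hx
        simp only [Set.mem_preimage, Set.mem_inter_iff, Set.mem_compl_iff,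
          Set.mem_singleton_iff] at hx ⊢
        refine ⟨hx.1, fun h => hx.2 ?_⟩
        rw [h, hF0]
      rw [le_antisymm hle1 hle2, hinv _ (hA.inter (measurableSet_singleton 0).compl)]
    rw [Measure.smul_apply, Measure.smul_apply,
      Measure.restrict_apply (hF hA), Measure.restrict_apply hA, key]

open scoped Topology

lemma aux_sing {𝕂 : Type*} [RCLike 𝕂] {X : Type*} [AddCommGroup X] [Module 𝕂 X]
    [TopologicalSpace X] [IsTopologicalAddGroup X] [ContinuousSMul 𝕂 X]
    [PolishSpace X] [MeasurableSpace X] [BorelSpace X]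
    (T : X → X) (hTlin : IsLinearMap 𝕂 T) (hTcont : Continuous T) (a b : 𝕂)
    (hab : ‖a‖ < ‖b‖) (m₁ m₂ : Measure X)
    [IsProbabilityMeasure m₁] [IsProbabilityMeasure m₂]
    (h₁ : ∀ A : Set X, MeasurableSet A → m₁ ((fun x => a • T x) ⁻¹' A) = m₁ A)
    (h₂ : ∀ A : Set X, MeasurableSet A → m₂ ((fun x => b • T x) ⁻¹' A) = m₂ A)
    (h10 : m₁ {0} = 0) : m₁.MutuallySingular m₂ := by
  letI := TopologicalSpace.upgradeIsCompletelyMetrizable X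
  have hbne : b ≠ 0 := by
    intro h
    rw [h, norm_zero] at hab
    exact absurd hab (not_lt.mpr (norm_nonneg a))
  set c : 𝕂 := a / b with hcdef
  have hc : ‖c‖ < 1 := by
    rw [hcdef, norm_div, div_lt_one (norm_pos_iff.mpr hbne)]
    exact hab
  set S₁ : X → X := fun x => a • T x with hS₁def
  set S₂ : X → X := fun x => b • T x with hS₂def
  have hS₁cont : Continuous S₁ := hTcont.const_smul a
  have hS₂cont : Continuous S₂ := hTcont.const_smul b
  have key : ∀ (n : ℕ) (x : X), S₁^[n] x = c ^ n • S₂^[n] x := by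
    intro n x
    rw [hS₁def, hS₂def, aux_pow T hTlin a n x, aux_pow T hTlin b n x, smul_smul,
      ← mul_pow, hcdef, div_mul_cancel₀ a hbne]
  -- choice of times
  have hchoice : ∀ k : ℕ, ∃ n : ℕ,
      m₂ (((fun y => c ^ n • y) ⁻¹' (Metric.ball (0:X) (1/(k+1))))ᶜ) ≤ (2:ℝ≥0∞)⁻¹ ^ k := by
    intro k
    have hr : (0:ℝ) < 1/(k+1) := by positivity
    set D : ℕ → Set X := fun n => (fun y => c ^ n • y) ⁻¹' (Metric.ball (0:X) (1/(k+1)))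
      with hDdef
    have hDmeas : ∀ n, MeasurableSet (D n) :=
      fun n => (continuous_const_smul (c ^ n)).measurable measurableSet_ball
    set C : ℕ → Set X := fun n => ⋂ (j) (_ : n ≤ j), D j with hCdef
    have hCmeas : ∀ n, MeasurableSet (C n) :=
      fun n => MeasurableSet.iInter fun j => MeasurableSet.iInter fun _ => hDmeas j
    have hCanti : Antitone (fun n => (C n)ᶜ) := by
      intro n n' hnn'
      apply Set.compl_subset_compl.mpr
      intro x hx
      simp only [hCdef, Set.mem_iInter] at hx ⊢
      intro j hj
      exact hx j (le_trans hnn' hj)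
    have hCunionU : (⋃ n, C n) = Set.univ := by
      ext y
      simp only [Set.mem_univ, iff_true, Set.mem_iUnion, hCdef, Set.mem_iInter]
      have hy : Tendsto (fun n => c ^ n • y) atTop (𝓝 (0:X)) := by
        have h0 : Tendsto (fun n => c ^ n) atTop (𝓝 (0:𝕂)) :=
          tendsto_pow_atTop_nhds_zero_of_norm_lt_one hc
        simpa using h0.smul_const y
      obtain ⟨N, hN⟩ := (hy.eventually
        (Metric.ball_mem_nhds (0:X) hr)).exists_forall_of_atTop
      exact ⟨N, fun j hj => hN j hj⟩
    have hInter : ⋂ n, (C n)ᶜ = ∅ := by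
      rw [← Set.compl_iUnion, hCunionU, Set.compl_univ]
    have htend : Tendsto (fun n => m₂ ((C n)ᶜ)) atTop (𝓝 0) := by
      have := tendsto_measure_iInter_atTop (μ := m₂)
        (fun n => (hCmeas n).compl.nullMeasurableSet) hCanti
        ⟨0, measure_ne_top m₂ _⟩
      rw [hInter] at this
      simpa [Function.comp_def, measure_empty] using this
    have hev := Filter.Tendsto.eventually_le_const
      (show (0:ℝ≥0∞) < 2⁻¹ ^ k from ENNReal.pow_pos (by norm_num) k) htend
    obtain ⟨n, hn⟩ := hev.exists
    refine ⟨n, le_trans (measure_mono ?_) hn⟩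
    apply Set.compl_subset_compl.mpr
    intro x hx
    simp only [hCdef, Set.mem_iInter] at hx
    exact hx n le_rfl
  choose nn hnn using hchoice
  set A : ℕ → Set X := fun k => (S₁^[nn k]) ⁻¹' ((Metric.ball (0:X) (1/(k+1)))ᶜ) with hAdef
  have hAmeas : ∀ k, MeasurableSet (A k) :=
    fun k => (hS₁cont.measurable.iterate (nn k)) measurableSet_ball.compl
  have hA2 : ∀ k, m₂ (A k) ≤ (2:ℝ≥0∞)⁻¹ ^ k := by
    intro k
    have heq : A k = (S₂^[nn k]) ⁻¹'
        (((fun y => c ^ (nn k) • y) ⁻¹' (Metric.ball (0:X) (1/(k+1))))ᶜ) := by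
      ext x
      simp only [hAdef, Set.mem_preimage, Set.mem_compl_iff, key (nn k) x]
    rw [heq, aux_iter m₂ S₂ hS₂cont.measurable h₂ (nn k) _
      (((continuous_const_smul (c ^ (nn k))).measurable measurableSet_ball).compl)]
    exact hnn k
  have hA1 : ∀ k, m₁ ((A k)ᶜ) = m₁ (Metric.ball (0:X) (1/(k+1))) := by
    intro k
    rw [hAdef]
    simp only [← Set.preimage_compl, compl_compl]
    exact aux_iter m₁ S₁ hS₁cont.measurable h₁ (nn k) _ measurableSet_ball
  set E : Set X := ⋃ K, ⋂ (k) (_ : K ≤ k), (A k)ᶜ with hEdef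
  have hEmeas : MeasurableSet E :=
    MeasurableSet.iUnion fun K => MeasurableSet.iInter fun k =>
      MeasurableSet.iInter fun _ => (hAmeas k).compl
  -- m₁ E = 0
  have hballtend : Tendsto (fun k : ℕ => m₁ (Metric.ball (0:X) (1/(k+1)))) atTop (𝓝 0) := by
    have hanti : Antitone (fun k : ℕ => Metric.ball (0:X) (1/(k+1))) := by
      intro k k' hkk'
      apply Metric.ball_subset_ball
      apply one_div_le_one_div_of_le (by positivity)
      exact_mod_cast Nat.succ_le_succ hkk'
    have htend := tendsto_measure_iInter_atTop (μ := m₁)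
      (fun k => measurableSet_ball.nullMeasurableSet) hanti
      ⟨0, measure_ne_top m₁ _⟩
    have hsub : (⋂ k : ℕ, Metric.ball (0:X) (1/(k+1))) ⊆ {0} := by
      intro x hx
      simp only [Set.mem_iInter, Metric.mem_ball] at hx
      simp only [Set.mem_singleton_iff]
      by_contra hne
      have hpos : (0:ℝ) < dist x 0 := dist_pos.mpr hne
      obtain ⟨k, hk⟩ := exists_nat_one_div_lt hpos
      exact absurd (hx k) (not_lt.mpr (le_of_lt hk))
    have hz : m₁ (⋂ k : ℕ, Metric.ball (0:X) (1/(k+1))) = 0 :=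
      le_antisymm (le_trans (measure_mono hsub) (le_of_eq h10)) (zero_le)
    rw [hz] at htend
    simpa [Function.comp_def] using htend
  have hm1E : m₁ E = 0 := by
    apply measure_iUnion_null
    intro K
    have hle : ∀ᶠ k : ℕ in atTop, m₁ (⋂ (k') (_ : K ≤ k'), (A k')ᶜ) ≤
        m₁ (Metric.ball (0:X) (1/(k+1))) := by
      filter_upwards [eventually_ge_atTop K] with k hk
      rw [← hA1 k]
      apply measure_mono
      intro x hx
      simp only [Set.mem_iInter] at hx
      exact hx k hk
    exact le_antisymm (ge_of_tendsto hballtend hle) (zero_le)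
  -- m₂ Eᶜ = 0
  have hm2E : m₂ Eᶜ = 0 := by
    have hbound : ∀ K : ℕ, m₂ Eᶜ ≤ (2:ℝ≥0∞)⁻¹ ^ K * 2 := by
      intro K
      have hsub : Eᶜ ⊆ ⋃ j : ℕ, A (K + j) := by
        intro x hx
        simp only [hEdef, Set.mem_compl_iff, Set.mem_iUnion, Set.mem_iInter,
          Set.mem_compl_iff] at hx
        push_neg at hx
        obtain ⟨k, hk, hxk⟩ := hx K
        refine Set.mem_iUnion.mpr ⟨k - K, ?_⟩
        rwa [Nat.add_sub_cancel' hk]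
      calc m₂ Eᶜ ≤ ∑' j : ℕ, m₂ (A (K + j)) :=
            le_trans (measure_mono hsub) (measure_iUnion_le _)
        _ ≤ ∑' j : ℕ, (2:ℝ≥0∞)⁻¹ ^ (K + j) := ENNReal.tsum_le_tsum fun j => hA2 (K + j)
        _ = (2:ℝ≥0∞)⁻¹ ^ K * ∑' j : ℕ, (2:ℝ≥0∞)⁻¹ ^ j := by
            simp_rw [pow_add]; rw [ENNReal.tsum_mul_left]
        _ = (2:ℝ≥0∞)⁻¹ ^ K * 2 := by
            rw [ENNReal.tsum_geometric]
            norm_num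
    have htend2 : Tendsto (fun K : ℕ => (2:ℝ≥0∞)⁻¹ ^ K * 2) atTop (𝓝 0) := by
      have hp : Tendsto (fun K : ℕ => (2:ℝ≥0∞)⁻¹ ^ K) atTop (𝓝 0) :=
        ENNReal.tendsto_pow_atTop_nhds_zero_of_lt_one (by norm_num)
      have := ENNReal.Tendsto.mul_const hp (Or.inr (by norm_num : (2:ℝ≥0∞) ≠ ⊤))
      simpa using this
    exact le_antisymm (ge_of_tendsto htend2 (Eventually.of_forall hbound)) (zero_le)
  exact ⟨E, hEmeas, hm1E, hm2E⟩

lemma aux_common {𝕂 : Type*} [RCLike 𝕂] {X : Type*} [AddCommGroup X] [Module 𝕂 X]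
    [TopologicalSpace X] [IsTopologicalAddGroup X] [ContinuousSMul 𝕂 X]
    [PolishSpace X] [MeasurableSpace X] [BorelSpace X]
    (T : X → X) (hTlin : IsLinearMap 𝕂 T) (hTcont : Continuous T) (a b : 𝕂)
    (hab : ‖a‖ = ‖b‖) (m : Measure X) [IsProbabilityMeasure m]
    (hminv : ∀ A : Set X, MeasurableSet A → m ((fun x => a • T x) ⁻¹' A) = m A) :
    ∃ μ : Measure X, IsProbabilityMeasure μ ∧
      (∀ A : Set X, MeasurableSet A → μ ((fun x => a • T x) ⁻¹' A) = μ A) ∧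
      (∀ A : Set X, MeasurableSet A → μ ((fun x => b • T x) ⁻¹' A) = μ A) ∧
      μ {0} = m {0} := by
  by_cases hba : b = a
  · subst hba
    exact ⟨m, inferInstance, hminv, hminv, rfl⟩
  · have hane : a ≠ 0 := by
      intro h
      apply hba
      rw [h, norm_zero] at hab
      rw [h]
      exact norm_eq_zero.mp hab.symm
    have hbne : b ≠ 0 := by
      intro h
      rw [h, norm_zero, norm_eq_zero] at hab
      exact hane hab
    letI := TopologicalSpace.upgradeIsCompletelyMetrizable X
    haveI : ProperSpace 𝕂 := FiniteDimensional.proper_rclike 𝕂 𝕂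
    set Γ := Metric.sphere (0:𝕂) 1 with hΓ
    haveI : CompactSpace Γ := inferInstance
    haveI : Nonempty Γ := ⟨⟨1, by rw [mem_sphere_zero_iff_norm]; exact norm_one⟩⟩
    set ν : Measure Γ := Measure.haarMeasure (⊤ : TopologicalSpace.PositiveCompacts Γ)
      with hν
    haveI hνprob : IsProbabilityMeasure ν := by
      constructor
      rw [hν, ← TopologicalSpace.PositiveCompacts.coe_top (α := Γ),
        Measure.haarMeasure_self]
    set π : Γ × X → X := fun p => (p.1 : 𝕂) • p.2 with hπ
    have hπcont : Continuous π :=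
      (continuous_subtype_val.comp continuous_fst).smul continuous_snd
    have hπmeas : Measurable π := hπcont.measurable
    set μ : Measure X := Measure.map π (ν.prod m) with hμ
    haveI : IsProbabilityMeasure μ := Measure.isProbabilityMeasure_map hπmeas.aemeasurable
    have hsmulmeas : ∀ (g : Γ) (A : Set X), MeasurableSet A →
        MeasurableSet ((fun x => (g : 𝕂) • x) ⁻¹' A) :=
      fun g A hA => (continuous_const_smul ((g : 𝕂))).measurable hA
    have keyform : ∀ A : Set X, MeasurableSet A →
        μ A = ∫⁻ g : Γ, m ((fun x => (g : 𝕂) • x) ⁻¹' A) ∂ν := by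
      intro A hA
      rw [hμ, Measure.map_apply hπmeas hA, Measure.prod_apply (hπmeas hA)]
      rfl
    refine ⟨μ, inferInstance, ?_, ?_, ?_⟩
    · intro A hA
      have hSA : MeasurableSet ((fun x => a • T x) ⁻¹' A) :=
        (hTcont.const_smul a).measurable hA
      rw [keyform _ hSA, keyform _ hA]
      apply lintegral_congr
      intro g
      have hset : ((fun x => (g:𝕂) • x) ⁻¹' ((fun x => a • T x) ⁻¹' A)) =
          (fun x => a • T x) ⁻¹' ((fun x => (g:𝕂) • x) ⁻¹' A) := by
        ext x
        simp only [Set.mem_preimage, hTlin.map_smul, smul_comm ((g:𝕂)) a]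
      rw [hset, hminv _ (hsmulmeas g A hA)]
    · intro A hA
      have hSA : MeasurableSet ((fun x => b • T x) ⁻¹' A) :=
        (hTcont.const_smul b).measurable hA
      rw [keyform _ hSA, keyform _ hA]
      set δ : 𝕂 := b / a with hδ
      have hδ1 : ‖δ‖ = 1 := by
        rw [hδ, norm_div, ← hab, div_self (norm_ne_zero_iff.mpr hane)]
      set δ' : Γ := ⟨δ, by rw [mem_sphere_zero_iff_norm]; exact hδ1⟩ with hδ'
      set f : Γ → ℝ≥0∞ := fun g => m ((fun x => (g:𝕂) • x) ⁻¹' A) with hf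
      have hsec : ∀ g : Γ, m ((fun x => (g:𝕂) • x) ⁻¹' ((fun x => b • T x) ⁻¹' A)) =
          f (δ' * g) := by
        intro g
        have hset : ((fun x => (g:𝕂) • x) ⁻¹' ((fun x => b • T x) ⁻¹' A)) =
            (fun x => a • T x) ⁻¹' ((fun x => ((δ' * g : Γ) : 𝕂) • x) ⁻¹' A) := by
          ext x
          simp only [Set.mem_preimage]
          have : b • T (((g:𝕂)) • x) = ((δ' * g : Γ) : 𝕂) • a • T x := by
            rw [hTlin.map_smul]
            simp only [Metric.unitSphere.coe_mul, smul_smul]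
            congr 1
            have hcoe : ((δ' * g : Γ) : 𝕂) = (b / a) * (g : 𝕂) := rfl
            rw [hcoe]
            field_simp
          rw [this]
        rw [hset, hminv _ (hsmulmeas _ A hA)]
      calc (∫⁻ g : Γ, m ((fun x => (g:𝕂) • x) ⁻¹' ((fun x => b • T x) ⁻¹' A)) ∂ν)
          = ∫⁻ g : Γ, f (δ' * g) ∂ν := lintegral_congr hsec
        _ = ∫⁻ g : Γ, f g ∂ν := lintegral_mul_left_eq_self f δ'
    · rw [keyform _ (measurableSet_singleton 0)]
      have hset : ∀ g : Γ, ((fun x => (g:𝕂) • x) ⁻¹' ({0} : Set X)) = {0} := by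
        intro g
        ext x
        simp only [Set.mem_preimage, Set.mem_singleton_iff, smul_eq_zero]
        have hgne : (g:𝕂) ≠ 0 := by
          have hg1 : ‖(g:𝕂)‖ = 1 := mem_sphere_zero_iff_norm.mp g.2
          intro h
          rw [h, norm_zero] at hg1
          norm_num at hg1
        tauto
      simp_rw [hset]
      rw [lintegral_const, measure_univ, mul_one]


/-- Let `T` be a continuous linear operator on a Polish topological vector
space `X` over `𝕂 = ℝ` or `ℂ`, and let `a, b ∈ 𝕂`. Assume `aT` and `bT` each admit a non-trivial
invariant Borel probability measure. Then `aT` and `bT` are orthogonal iff `|a| ≠ |b|`; more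
precisely, if `|a| ≠ |b|` then any invariant probability measures for `aT`, `bT` not charging
`{0}` are mutually singular, and if `|a| = |b|` then `aT` and `bT` share a common invariant
probability measure different from `δ₀`. -/
theorem scalar_multiples_orthogonal_iff
    {𝕂 : Type*} [RCLike 𝕂] {X : Type*} [AddCommGroup X] [Module 𝕂 X]
    [TopologicalSpace X] [IsTopologicalAddGroup X] [ContinuousSMul 𝕂 X]
    [PolishSpace X] [MeasurableSpace X] [BorelSpace X]
    (T : X → X) (hTlin : IsLinearMap 𝕂 T) (hTcont : Continuous T) (a b : 𝕂)
    (ha : ∃ m : Measure X, IsProbabilityMeasure m ∧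
        (∀ A : Set X, MeasurableSet A → m ((fun x => a • T x) ⁻¹' A) = m A) ∧
        m ≠ Measure.dirac 0)
    (hb : ∃ m : Measure X, IsProbabilityMeasure m ∧
        (∀ A : Set X, MeasurableSet A → m ((fun x => b • T x) ⁻¹' A) = m A) ∧
        m ≠ Measure.dirac 0) :
    ((∀ m₁ m₂ : Measure X, IsProbabilityMeasure m₁ → IsProbabilityMeasure m₂ →
        (∀ A : Set X, MeasurableSet A → m₁ ((fun x => a • T x) ⁻¹' A) = m₁ A) →
        (∀ A : Set X, MeasurableSet A → m₂ ((fun x => b • T x) ⁻¹' A) = m₂ A) →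
        m₁ {0} = 0 → m₂ {0} = 0 → m₁.MutuallySingular m₂) ↔ ‖a‖ ≠ ‖b‖) ∧
    (‖a‖ = ‖b‖ → ∃ m : Measure X, IsProbabilityMeasure m ∧
        (∀ A : Set X, MeasurableSet A → m ((fun x => a • T x) ⁻¹' A) = m A) ∧
        (∀ A : Set X, MeasurableSet A → m ((fun x => b • T x) ⁻¹' A) = m A) ∧
        m ≠ Measure.dirac 0) := by
  letI := TopologicalSpace.upgradeIsCompletelyMetrizable X
  obtain ⟨m, hmp, hminv, hmne⟩ := ha
  haveI := hmp
  have hm0 : m {(0:X)} ≠ 1 := fun h => hmne (aux_eq_dirac h)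
  constructor
  · constructor
    · intro hall
      by_contra hnne
      have heq : ‖a‖ = ‖b‖ := hnne
      obtain ⟨μ, hμp, hμa, hμb, hμ0⟩ := aux_common T hTlin hTcont a b heq m hminv
      haveI := hμp
      have hμ0ne : μ {(0:X)} ≠ 1 := by rw [hμ0]; exact hm0
      obtain ⟨μ', hp', h0', hinv'⟩ := aux_strip μ hμ0ne
      haveI := hp'
      have hFa : Measurable (fun x => a • T x) := (hTcont.const_smul a).measurable
      have hFb : Measurable (fun x => b • T x) := (hTcont.const_smul b).measurable
      have h0a : (fun x => a • T x) 0 = 0 := by simp [hTlin.map_zero]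
      have h0b : (fun x => b • T x) 0 = 0 := by simp [hTlin.map_zero]
      have inva := hinv' _ hFa h0a hμa
      have invb := hinv' _ hFb h0b hμb
      obtain ⟨s, hs, h1, h2⟩ := hall μ' μ' hp' hp' inva invb h0' h0'
      have hcontra : (1:ℝ≥0∞) ≤ 0 := by
        calc (1:ℝ≥0∞) = μ' Set.univ := measure_univ.symm
          _ = μ' (s ∪ sᶜ) := by rw [Set.union_compl_self]
          _ ≤ μ' s + μ' sᶜ := measure_union_le _ _
          _ = 0 := by rw [h1, h2, add_zero]
      norm_num at hcontra
    · intro hne m₁ m₂ hp1 hp2 inv1 inv2 h01 h02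
      haveI := hp1; haveI := hp2
      rcases hne.lt_or_gt with h | h
      · exact aux_sing T hTlin hTcont a b h m₁ m₂ inv1 inv2 h01
      · exact (aux_sing T hTlin hTcont b a h m₂ m₁ inv2 inv1 h02).symm
  · intro heq
    obtain ⟨μ, hμp, hμa, hμb, hμ0⟩ := aux_common T hTlin hTcont a b heq m hminv
    haveI := hμp
    refine ⟨μ, hμp, hμa, hμb, ?_⟩
    intro h
    apply hm0
    rw [← hμ0, h, Measure.dirac_apply' _ (measurableSet_singleton 0)]
    simp
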